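/- Let Q be a probability distribution on ℝ with finite second moment and fix τ ∈ (0,1). Then there is at most one t* ∈ ℝ satisfying τ ∫_{y ≥ t*} (y - t*) dQ(y) = (1-τ) ∫_{y < t*} (t* - y) dQ(y) (i.e., the τ-expectile is unique when it exists). -/

import Mathlib

open MeasureTheory

theorem expectile_unique (Q : Measure ℝ) [IsProbabilityMeasure Q]
    (hQ2 : Integrable (fun y : ℝ => y ^ 2) Q)
    (τ : ℝ) (hτ : τ ∈ Set.Ioo (0 : ℝ) 1) (t₁ t₂ : ℝ)
    (h₁ : τ * ∫ y in Set.Ici t₁, (y - t₁) ∂Q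
      = (1 - τ) * ∫ y in Set.Iio t₁, (t₁ - y) ∂Q)
    (h₂ : τ * ∫ y in Set.Ici t₂, (y - t₂) ∂Q
      = (1 - τ) * ∫ y in Set.Iio t₂, (t₂ - y) ∂Q) :
    t₁ = t₂ := by
  -- integrability of y
  have hy : Integrable (fun y : ℝ => y) Q := by
    have h1 : Integrable (fun y : ℝ => 1 + y ^ 2) Q := (integrable_const 1).add hQ2
    refine h1.mono' measurable_id.aestronglyMeasurable (ae_of_all _ fun y => ?_)
    have : |y| ≤ 1 + y ^ 2 := by nlinarith [sq_nonneg (|y| - 1), sq_abs y]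
    simpa using this
  have hf : ∀ t : ℝ, Integrable (fun y => max (y - t) 0) Q := by
    intro t
    refine ((hy.sub (integrable_const t)).abs).mono'
      (((measurable_id.sub_const t).max measurable_const).aestronglyMeasurable)
      (ae_of_all _ fun y => ?_)
    simp only [Pi.sub_apply, Real.norm_eq_abs]
    rw [abs_of_nonneg (le_max_right _ _)]
    exact max_le (le_abs_self _) (abs_nonneg _)
  have hg : ∀ t : ℝ, Integrable (fun y => max (t - y) 0) Q := by
    intro t
    refine (((integrable_const t).sub hy).abs).mono'
      (((measurable_const.sub measurable_id).max measurable_const).aestronglyMeasurable)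
      (ae_of_all _ fun y => ?_)
    simp only [Pi.sub_apply, Real.norm_eq_abs]
    rw [abs_of_nonneg (le_max_right _ _)]
    exact max_le (le_abs_self _) (abs_nonneg _)
  -- set integrals equal full integrals of positive parts
  have hA : ∀ t : ℝ, ∫ y in Set.Ici t, (y - t) ∂Q = ∫ y, max (y - t) 0 ∂Q := by
    intro t
    have hsplit := integral_add_compl (measurableSet_Ici (a := t)) (hf t)
    rw [Set.compl_Ici] at hsplit
    have h0 : ∫ y in Set.Iio t, max (y - t) 0 ∂Q = 0 := by
      rw [setIntegral_congr_fun measurableSet_Iio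
        (g := fun _ => (0 : ℝ)) (fun y hy => max_eq_right (by simp at hy; linarith))]
      simp
    have h1 : ∫ y in Set.Ici t, max (y - t) 0 ∂Q = ∫ y in Set.Ici t, (y - t) ∂Q := by
      exact setIntegral_congr_fun measurableSet_Ici
        (fun y hy => max_eq_left (by simp at hy; linarith))
    rw [h0, add_zero, h1] at hsplit
    exact hsplit
  have hB : ∀ t : ℝ, ∫ y in Set.Iio t, (t - y) ∂Q = ∫ y, max (t - y) 0 ∂Q := by
    intro t
    have hsplit := integral_add_compl (measurableSet_Iio (a := t)) (hg t)
    rw [Set.compl_Iio] at hsplit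
    have h0 : ∫ y in Set.Ici t, max (t - y) 0 ∂Q = 0 := by
      rw [setIntegral_congr_fun measurableSet_Ici
        (g := fun _ => (0 : ℝ)) (fun y hy => max_eq_right (by simp at hy; linarith))]
      simp
    have h1 : ∫ y in Set.Iio t, max (t - y) 0 ∂Q = ∫ y in Set.Iio t, (t - y) ∂Q := by
      exact setIntegral_congr_fun measurableSet_Iio
        (fun y hy => max_eq_left (by simp at hy; linarith))
    rw [h0, add_zero, h1] at hsplit
    exact hsplit
  set A : ℝ → ℝ := fun t => ∫ y, max (y - t) 0 ∂Q with hAdef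
  set B : ℝ → ℝ := fun t => ∫ y, max (t - y) 0 ∂Q with hBdef
  set μ : ℝ := ∫ y, y ∂Q with hμdef
  -- A t - B t = μ - t
  have hAB : ∀ t : ℝ, A t - B t = μ - t := by
    intro t
    have heq : (fun y : ℝ => max (y - t) 0 - max (t - y) 0) = fun y => y - t := by
      funext y
      rcases le_total y t with h | h
      · rw [max_eq_right (by linarith), max_eq_left (by linarith)]; ring
      · rw [max_eq_left (by linarith), max_eq_right (by linarith)]; ring
    have := integral_sub (hf t) (hg t)
    rw [heq] at this
    rw [hAdef, hBdef, ← this, integral_sub hy (integrable_const t), integral_const]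
    simp [hμdef]
  -- monotonicity bounds on A
  have hmono : ∀ s t : ℝ, s ≤ t → A t ≤ A s ∧ A s ≤ A t + (t - s) := by
    intro s t hst
    constructor
    · exact integral_mono (hf t) (hf s)
        (fun y => max_le_max (by linarith) le_rfl)
    · have hle : ∀ y : ℝ, max (y - s) 0 ≤ max (y - t) 0 + (t - s) := by
        intro y
        refine max_le ?_ ?_
        · have := le_max_left (y - t) 0; linarith
        · have := le_max_right (y - t) 0; linarith
      have := integral_mono (hf s) ((hf t).add (integrable_const (t - s)))
        hle
      simp only [Pi.add_apply] at this
      rwa [integral_add (hf t) (integrable_const (t - s)), integral_const,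
        probReal_univ, one_smul] at this
  -- key lemma
  have key : ∀ s t : ℝ, s < t → τ * A s = (1 - τ) * B s → τ * A t = (1 - τ) * B t → False := by
    intro s t hst hs ht
    obtain ⟨hD0, hD1⟩ := hmono s t hst.le
    have hBs : B s = A s - (μ - s) := by have := hAB s; linarith
    have hBt : B t = A t - (μ - t) := by have := hAB t; linarith
    rw [hBs] at hs; rw [hBt] at ht
    have hτ0 := hτ.1
    have hτ1 := hτ.2
    nlinarith [mul_pos hτ0 (sub_pos.mpr hst),
      mul_nonneg hτ0.le (sub_nonneg.mpr hD0),
      mul_nonneg (by linarith : (0:ℝ) ≤ 1 - τ) (by linarith : (0:ℝ) ≤ t - s - (A s - A t))]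
  rw [hA t₁, hB t₁] at h₁
  rw [hA t₂, hB t₂] at h₂
  rcases lt_trichotomy t₁ t₂ with h | h | h
  · exact absurd (key t₁ t₂ h h₁ h₂) (not_false)
  · exact h
  · exact absurd (key t₂ t₁ h h₂ h₁) (not_false)
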